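/- Let (X_i)_{i∈ℤ} be an ℝ^d-valued L^p-stationary η-weakly dependent time series (p > 1) with coefficients (η_r), and let h: ℝ^d → ℝ satisfy |h(x)| ≤ c‖x‖^a and |h(x)−h(y)| ≤ c‖x−y‖(‖x‖^{a−1}+‖y‖^{a−1}) with 1 ≤ a < p. Then Y_i = h(X_i) is η-weakly dependent with coefficients η^Y_r ≤ C·η_r^{(p−a)/(p−1)} for some C > 0. -/

import Mathlib

open MeasureTheory Filter

noncomputable def stclip (M t : ℝ) : ℝ := max (-M) (min M t)

lemma stclip_abs_le {M : ℝ} (hM : 0 ≤ M) (t : ℝ) : |stclip M t| ≤ M :=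
  abs_le.mpr ⟨le_max_left _ _, max_le (by linarith) (min_le_left _ _)⟩

lemma stclip_lip (M s t : ℝ) : |stclip M s - stclip M t| ≤ |s - t| := by
  calc |stclip M s - stclip M t|
      ≤ max |(-M) - (-M)| |min M s - min M t| := abs_max_sub_max_le_max _ _ _ _
    _ = |min M s - min M t| := by simp
    _ ≤ max |M - M| |s - t| := abs_min_sub_min_le_max _ _ _ _
    _ = |s - t| := by simp

lemma stclip_eq {M t : ℝ} (h : |t| ≤ M) : stclip M t = t := by
  rcases abs_le.mp h with ⟨h1, h2⟩
  rw [stclip, min_eq_right h2, max_eq_right h1]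

lemma stmt12_bddInt {Ω : Type*} [MeasurableSpace Ω] (μ : Measure Ω) [IsProbabilityMeasure μ]
    {f : Ω → ℝ} {B : ℝ} (hf : Measurable f) (hb : ∀ ω, |f ω| ≤ B) : Integrable f μ :=
  (integrable_const B).mono' hf.aestronglyMeasurable
    (ae_of_all _ fun ω => by simpa [Real.norm_eq_abs] using hb ω)

lemma stmt12_intLe {Ω : Type*} [MeasurableSpace Ω] (μ : Measure Ω) [IsProbabilityMeasure μ]
    {f : Ω → ℝ} {B : ℝ} (hb : ∀ ω, |f ω| ≤ B) : |∫ ω, f ω ∂μ| ≤ B := by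
  have := norm_integral_le_of_norm_le_const (μ := μ) (f := f) (C := B)
    (ae_of_all _ fun ω => by simpa [Real.norm_eq_abs] using hb ω)
  simpa [Real.norm_eq_abs, measure_univ] using this

lemma stmt12_absInt {Ω : Type*} [MeasurableSpace Ω] (μ : Measure Ω)
    (f : Ω → ℝ) : |∫ ω, f ω ∂μ| ≤ ∫ ω, |f ω| ∂μ := by
  simpa [Real.norm_eq_abs] using norm_integral_le_integral_norm (μ := μ) f

lemma stmt12_lipCont {n : ℕ} (g : (Fin n → ℝ) → ℝ) (L : ℝ)
    (hg : ∀ x y, |g x - g y| ≤ L * ∑ i, |x i - y i|) : Continuous g := by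
  have : LipschitzWith (Real.toNNReal (|L| * n)) g := by
    apply LipschitzWith.of_dist_le_mul
    intro x y
    rw [Real.dist_eq, Real.coe_toNNReal _ (by positivity)]
    have h1 : ∑ i, |x i - y i| ≤ (n : ℝ) * dist x y := by
      calc ∑ i, |x i - y i| ≤ ∑ _i : Fin n, dist x y :=
            Finset.sum_le_sum fun i _ => by
              rw [← Real.dist_eq]; exact dist_le_pi_dist x y i
        _ = (n : ℝ) * dist x y := by simp [Finset.sum_const, nsmul_eq_mul]
    calc |g x - g y| ≤ L * ∑ i, |x i - y i| := hg x y
      _ ≤ |L| * ∑ i, |x i - y i| := by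
          exact mul_le_mul_of_nonneg_right (le_abs_self L) (by positivity)
      _ ≤ |L| * ((n : ℝ) * dist x y) := mul_le_mul_of_nonneg_left h1 (abs_nonneg L)
      _ = |L| * n * dist x y := by ring
  exact this.continuous

lemma stmt12_hCont {d : ℕ} (h : (Fin d → ℝ) → ℝ) (c a : ℝ) (ha : 1 ≤ a)
    (hlip : ∀ x y, |h x - h y| ≤ c * ‖x - y‖ * (‖x‖ ^ (a-1) + ‖y‖ ^ (a-1))) :
    Continuous h := by
  rw [continuous_iff_continuousAt]
  intro x
  have hb : Continuous fun y : Fin d → ℝ => c * ‖y - x‖ * (‖y‖ ^ (a-1) + ‖x‖ ^ (a-1)) :=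
    (continuous_const.mul ((continuous_id.sub continuous_const).norm)).mul
      ((continuous_norm.rpow_const (fun _ => Or.inr (by linarith))).add continuous_const)
  have hb0 : Tendsto (fun y : Fin d → ℝ => c * ‖y - x‖ * (‖y‖ ^ (a-1) + ‖x‖ ^ (a-1)))
      (nhds x) (nhds 0) := by
    have := hb.tendsto x
    simpa using this
  rw [ContinuousAt, tendsto_iff_dist_tendsto_zero]
  apply squeeze_zero (fun y => dist_nonneg) (fun y => ?_) hb0
  rw [Real.dist_eq]
  exact hlip y x

lemma stmt12_stat {Ω : Type*} [MeasurableSpace Ω] (μ : Measure Ω) {d : ℕ}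
    (X : ℤ → Ω → (Fin d → ℝ)) (p : ℝ) (hmeas : ∀ i, Measurable (X i))
    (hp : (0:ℝ) ≤ p)
    (hXp : Integrable (fun ω => ‖X 0 ω‖ ^ p) μ)
    (hstat : ∀ (t : ℤ) (n : ℕ) (idx : Fin n → ℤ),
      Measure.map (fun ω => fun i => X (idx i + t) ω) μ
        = Measure.map (fun ω => fun i => X (idx i) ω) μ)
    (i : ℤ) :
    Integrable (fun ω => ‖X i ω‖ ^ p) μ ∧
      (∫ ω, ‖X i ω‖ ^ p ∂μ) = ∫ ω, ‖X 0 ω‖ ^ p ∂μ := by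
  set F : ℤ → Ω → (Fin 1 → Fin d → ℝ) := fun j ω _ => X j ω with hF
  have hFmeas : ∀ j, Measurable (F j) := fun j => measurable_pi_lambda _ fun _ => hmeas j
  have hmap : Measure.map (F i) μ = Measure.map (F 0) μ := by
    have := hstat i 1 (fun _ => 0)
    simpa [hF] using this
  set e : (Fin 1 → Fin d → ℝ) → ℝ := fun v => ‖v 0‖ ^ p with he
  have hecont : Continuous e := (continuous_apply 0).norm.rpow_const fun _ => Or.inr hp
  have h0 : Integrable e (Measure.map (F 0) μ) := by
    rw [integrable_map_measure hecont.measurable.aestronglyMeasurable ((hFmeas 0).aemeasurable)]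
    exact hXp
  have hi : Integrable (fun ω => ‖X i ω‖ ^ p) μ := by
    exact (integrable_map_measure hecont.measurable.aestronglyMeasurable
      ((hFmeas i).aemeasurable)).mp (hmap ▸ h0)
  refine ⟨hi, ?_⟩
  have e1 : (∫ ω, ‖X i ω‖ ^ p ∂μ) = ∫ v, e v ∂(Measure.map (F i) μ) :=
    (integral_map (hFmeas i).aemeasurable hecont.measurable.aestronglyMeasurable).symm
  have e2 : (∫ v, e v ∂(Measure.map (F 0) μ)) = ∫ ω, ‖X 0 ω‖ ^ p ∂μ :=
    integral_map (hFmeas 0).aemeasurable hecont.measurable.aestronglyMeasurable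
  rw [e1, hmap, e2]


set_option maxHeartbeats 2000000 in
/-- if `(X_i)` is an `ℝ^d`-valued `L^p`-stationary η-weakly dependent
time series and `h` satisfies `|h(x)| ≤ c‖x‖^a`, `|h(x)−h(y)| ≤ c‖x−y‖(‖x‖^{a−1}+‖y‖^{a−1})`
with `1 ≤ a < p`, then `Y_i = h(X_i)` is η-weakly dependent with coefficients
`η^Y_r ≤ C·η_r^{(p−a)/(p−1)}`. -/
theorem stmt12
    {Ω : Type*} [MeasurableSpace Ω] (μ : Measure Ω) [IsProbabilityMeasure μ]
    (d : ℕ) (X : ℤ → Ω → (Fin d → ℝ)) (η : ℕ → ℝ)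
    (p a c : ℝ) (hp : 1 < p) (ha1 : 1 ≤ a) (hap : a < p) (hc : 0 < c)
    (hηpos : ∀ r, 0 < η r) (hη0 : Tendsto η atTop (nhds 0))
    (hmeas : ∀ i, Measurable (X i))
    (hXp : Integrable (fun ω => ‖X 0 ω‖ ^ p) μ)
    (hstat : ∀ (t : ℤ) (n : ℕ) (idx : Fin n → ℤ),
      Measure.map (fun ω => fun i => X (idx i + t) ω) μ
        = Measure.map (fun ω => fun i => X (idx i) ω) μ)
    -- η-weak dependence of X
    (hηdep : ∀ (r u v : ℕ) (iidx : Fin u → ℤ) (jidx : Fin v → ℤ),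
      Monotone iidx → Monotone jidx →
      (∀ (α : Fin u) (β : Fin v), iidx α + r ≤ jidx β) →
      ∀ (g₁ : (Fin u → (Fin d → ℝ)) → ℝ) (g₂ : (Fin v → (Fin d → ℝ)) → ℝ)
        (L₁ L₂ B₁ B₂ : ℝ),
        (∀ x, |g₁ x| ≤ B₁) → (∀ x, |g₂ x| ≤ B₂) →
        (∀ x y, |g₁ x - g₁ y| ≤ L₁ * ∑ i, ‖x i - y i‖) →
        (∀ x y, |g₂ x - g₂ y| ≤ L₂ * ∑ i, ‖x i - y i‖) →
        |(∫ ω, g₁ (fun α => X (iidx α) ω) * g₂ (fun β => X (jidx β) ω) ∂μ)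
            - (∫ ω, g₁ (fun α => X (iidx α) ω) ∂μ) * ∫ ω, g₂ (fun β => X (jidx β) ω) ∂μ|
          ≤ ((u : ℝ) * L₁ * B₂ + (v : ℝ) * L₂ * B₁) * η r)
    (h : (Fin d → ℝ) → ℝ) (Y : ℤ → Ω → ℝ)
    (hgrowth : ∀ x, |h x| ≤ c * ‖x‖ ^ a)
    (hlip : ∀ x y, |h x - h y| ≤ c * ‖x - y‖ * (‖x‖ ^ (a - 1) + ‖y‖ ^ (a - 1)))
    (hY : ∀ i ω, Y i ω = h (X i ω)) :
    ∃ C : ℝ, 0 < C ∧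
      ∀ (r u v : ℕ) (iidx : Fin u → ℤ) (jidx : Fin v → ℤ),
        Monotone iidx → Monotone jidx →
        (∀ (α : Fin u) (β : Fin v), iidx α + r ≤ jidx β) →
        ∀ (g₁ : (Fin u → ℝ) → ℝ) (g₂ : (Fin v → ℝ) → ℝ) (L₁ L₂ B₁ B₂ : ℝ),
          (∀ x, |g₁ x| ≤ B₁) → (∀ x, |g₂ x| ≤ B₂) →
          (∀ x y, |g₁ x - g₁ y| ≤ L₁ * ∑ i, |x i - y i|) →
          (∀ x y, |g₂ x - g₂ y| ≤ L₂ * ∑ i, |x i - y i|) →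
          |(∫ ω, g₁ (fun α => Y (iidx α) ω) * g₂ (fun β => Y (jidx β) ω) ∂μ)
              - (∫ ω, g₁ (fun α => Y (iidx α) ω) ∂μ) * ∫ ω, g₂ (fun β => Y (jidx β) ω) ∂μ|
            ≤ ((u : ℝ) * L₁ * B₂ + (v : ℝ) * L₂ * B₁) * (C * η r ^ ((p - a) / (p - 1))) := by
  classical
  have hp0 : (0:ℝ) ≤ p := by linarith
  set K : ℝ := ∫ ω, ‖X 0 ω‖ ^ p ∂μ with hKdef
  have hK0 : 0 ≤ K := integral_nonneg fun ω => Real.rpow_nonneg (norm_nonneg _) p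
  have hXK : ∀ i : ℤ, Integrable (fun ω => ‖X i ω‖ ^ p) μ ∧
      (∫ ω, ‖X i ω‖ ^ p ∂μ) = K := fun i => stmt12_stat μ X p hmeas hp0 hXp hstat i
  have hhcont : Continuous h := stmt12_hCont h c a ha1 hlip
  refine ⟨2 * c * (1 + 2 * K), by nlinarith, ?_⟩
  intro r u v iidx jidx hmono1 hmono2 hgap g₁ g₂ L₁ L₂ B₁ B₂ hB₁ hB₂ hL₁ hL₂
  have hB₁0 : 0 ≤ B₁ := (abs_nonneg _).trans (hB₁ fun _ => 0)
  have hB₂0 : 0 ≤ B₂ := (abs_nonneg _).trans (hB₂ fun _ => 0)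
  have hθpos : 0 < η r ^ ((p - a) / (p - 1)) := Real.rpow_pos_of_pos (hηpos r) _
  have hCpos : 0 < 2 * c * (1 + 2 * K) := by nlinarith
  have hCθpos : 0 < 2 * c * (1 + 2 * K) * (η r ^ ((p - a) / (p - 1))) := mul_pos hCpos hθpos
  simp only [hY]
  -- degenerate cases
  rcases Nat.eq_zero_or_pos u with hu | hu
  · subst hu
    have hconst : ∀ w : Fin 0 → ℝ, g₁ w = g₁ (fun _ => 0) :=
      fun w => congrArg g₁ (funext fun i => i.elim0)
    have hL₂0 : 0 ≤ (v : ℝ) * L₂ * B₁ := by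
      rcases Nat.eq_zero_or_pos v with hv | hv
      · subst hv; simp
      · have hvpos : (0:ℝ) < v := by exact_mod_cast hv
        have h2 := hL₂ (fun _ => 0) (fun _ => 1)
        have h2' : |g₂ (fun _ => 0) - g₂ (fun _ => 1)| ≤ L₂ * v := by
          simpa [Finset.sum_const, Finset.card_univ, nsmul_eq_mul] using h2
        have : 0 ≤ L₂ := by nlinarith [abs_nonneg (g₂ (fun _ => 0) - g₂ (fun _ => 1))]
        positivity
    have e1 : (∫ ω, g₁ (fun α => h (X (iidx α) ω)) * g₂ (fun β => h (X (jidx β) ω)) ∂μ)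
        = g₁ (fun _ => 0) * ∫ ω, g₂ (fun β => h (X (jidx β) ω)) ∂μ := by
      simp only [hconst]
      exact integral_const_mul _ _
    have e2 : (∫ ω, g₁ (fun α => h (X (iidx α) ω)) ∂μ) = g₁ (fun _ => 0) := by
      simp only [hconst]
      simp [measure_univ]
    rw [e1, e2, sub_self, abs_zero]
    push_cast
    nlinarith
  rcases Nat.eq_zero_or_pos v with hv | hv
  · subst hv
    have hconst : ∀ w : Fin 0 → ℝ, g₂ w = g₂ (fun _ => 0) :=
      fun w => congrArg g₂ (funext fun i => i.elim0)
    have hL₁0 : 0 ≤ (u : ℝ) * L₁ * B₂ := by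
      have hupos : (0:ℝ) < u := by exact_mod_cast hu
      have h2 := hL₁ (fun _ => 0) (fun _ => 1)
      have h2' : |g₁ (fun _ => 0) - g₁ (fun _ => 1)| ≤ L₁ * u := by
        simpa [Finset.sum_const, Finset.card_univ, nsmul_eq_mul] using h2
      have : 0 ≤ L₁ := by nlinarith [abs_nonneg (g₁ (fun _ => 0) - g₁ (fun _ => 1))]
      positivity
    have e1 : (∫ ω, g₁ (fun α => h (X (iidx α) ω)) * g₂ (fun β => h (X (jidx β) ω)) ∂μ)
        = (∫ ω, g₁ (fun α => h (X (iidx α) ω)) ∂μ) * g₂ (fun _ => 0) := by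
      simp only [hconst]
      exact integral_mul_const _ _
    have e2 : (∫ ω, g₂ (fun β => h (X (jidx β) ω)) ∂μ) = g₂ (fun _ => 0) := by
      simp only [hconst]
      simp [measure_univ]
    rw [e1, e2, sub_self, abs_zero]
    push_cast
    nlinarith
  -- main case
  have hupos : (0:ℝ) < u := by exact_mod_cast hu
  have hvpos : (0:ℝ) < v := by exact_mod_cast hv
  have hL₁0 : 0 ≤ L₁ := by
    have h2 := hL₁ (fun _ => 0) (fun _ => 1)
    have h2' : |g₁ (fun _ => 0) - g₁ (fun _ => 1)| ≤ L₁ * u := by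
      simpa [Finset.sum_const, Finset.card_univ, nsmul_eq_mul] using h2
    nlinarith [abs_nonneg (g₁ (fun _ => 0) - g₁ (fun _ => 1))]
  have hL₂0 : 0 ≤ L₂ := by
    have h2 := hL₂ (fun _ => 0) (fun _ => 1)
    have h2' : |g₂ (fun _ => 0) - g₂ (fun _ => 1)| ≤ L₂ * v := by
      simpa [Finset.sum_const, Finset.card_univ, nsmul_eq_mul] using h2
    nlinarith [abs_nonneg (g₂ (fun _ => 0) - g₂ (fun _ => 1))]
  set M : ℝ := η r ^ ((1:ℝ) / (1 - p)) with hMdef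
  have hM : 0 < M := Real.rpow_pos_of_pos (hηpos r) _
  have hp1 : p - 1 ≠ 0 := by intro hh; nlinarith
  have h1p : (1:ℝ) - p ≠ 0 := by intro hh; nlinarith
  have hKey2 : M ^ (a - p) = η r ^ ((p - a) / (p - 1)) := by
    rw [hMdef, ← Real.rpow_mul (hηpos r).le]
    congr 1
    field_simp
    ring
  have hKey1 : M ^ (a - 1) * η r = η r ^ ((p - a) / (p - 1)) := by
    have e0 : M ^ (a - 1) * η r
        = η r ^ ((1/(1-p))*(a-1)) * η r ^ (1:ℝ) := by
      rw [Real.rpow_one, hMdef, ← Real.rpow_mul (hηpos r).le]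
    rw [e0, ← Real.rpow_add (hηpos r)]
    congr 1
    field_simp
    ring
  have ha10 : (0:ℝ) ≤ a - 1 := by linarith
  have ha0 : (0:ℝ) ≤ a := by linarith
  -- truncation
  set τ : (Fin d → ℝ) → (Fin d → ℝ) := fun x i => stclip M (x i) with hτdef
  have hτ1 : ∀ x, ‖τ x‖ ≤ M := fun x =>
    (pi_norm_le_iff_of_nonneg hM.le).mpr fun i => by
      simpa [hτdef, Real.norm_eq_abs] using stclip_abs_le hM.le (x i)
  have hτ2 : ∀ x y, ‖τ x - τ y‖ ≤ ‖x - y‖ := fun x y => by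
    refine (pi_norm_le_iff_of_nonneg (norm_nonneg _)).mpr fun i => ?_
    have h1 : (τ x - τ y) i = stclip M (x i) - stclip M (y i) := by simp [hτdef]
    rw [h1, Real.norm_eq_abs]
    refine (stclip_lip M (x i) (y i)).trans ?_
    simpa [Real.norm_eq_abs] using norm_le_pi_norm (x - y) i
  have hτ3 : ∀ x, ‖x‖ ≤ M → τ x = x := fun x hx => funext fun i =>
    stclip_eq (by
      have h1 := norm_le_pi_norm x i
      rw [Real.norm_eq_abs] at h1
      exact h1.trans hx)
  set ψ : (Fin d → ℝ) → ℝ := fun x => h (τ x) with hψdef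
  have hψlip : ∀ x y, |ψ x - ψ y| ≤ 2*c*M^(a-1) * ‖x - y‖ := fun x y => by
    have hx : ‖τ x‖ ^ (a-1) ≤ M ^ (a-1) := Real.rpow_le_rpow (norm_nonneg _) (hτ1 x) ha10
    have hy : ‖τ y‖ ^ (a-1) ≤ M ^ (a-1) := Real.rpow_le_rpow (norm_nonneg _) (hτ1 y) ha10
    calc |ψ x - ψ y| ≤ c * ‖τ x - τ y‖ * (‖τ x‖^(a-1) + ‖τ y‖^(a-1)) := hlip _ _
      _ ≤ c * ‖x - y‖ * (M^(a-1) + M^(a-1)) := by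
          refine mul_le_mul (mul_le_mul_of_nonneg_left (hτ2 x y) hc.le)
            (add_le_add hx hy) (by positivity) (by positivity)
      _ = 2*c*M^(a-1) * ‖x - y‖ := by ring
  have hψcont : Continuous ψ := by
    have hl : LipschitzWith (Real.toNNReal (2*c*M^(a-1))) ψ := by
      apply LipschitzWith.of_dist_le_mul
      intro x y
      rw [Real.dist_eq, dist_eq_norm, Real.coe_toNNReal _ (by positivity)]
      exact hψlip x y
    exact hl.continuous
  have hΔh : ∀ x, |h x - ψ x| ≤ 2*c*M^(a-p) * ‖x‖^p := by
    intro x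
    by_cases hx : ‖x‖ ≤ M
    · have e1 : ψ x = h x := congrArg h (hτ3 x hx)
      rw [e1, sub_self, abs_zero]
      positivity
    · push_neg at hx
      have hxpos : 0 < ‖x‖ := hM.trans hx
      have htax : ‖τ x‖ ^ a ≤ ‖x‖ ^ a :=
        Real.rpow_le_rpow (norm_nonneg _) ((hτ1 x).trans hx.le) ha0
      have hsplit : ‖x‖ ^ a = ‖x‖^(a-p) * ‖x‖^p := by
        have e : a - p + p = a := by ring
        rw [← Real.rpow_add hxpos, e]
      have hbase : ‖x‖^(a-p) ≤ M^(a-p) :=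
        Real.rpow_le_rpow_of_nonpos hM hx.le (by linarith)
      calc |h x - ψ x| ≤ |h x| + |ψ x| := by
            rw [sub_eq_add_neg]
            refine (abs_add_le _ _).trans ?_
            rw [abs_neg]
        _ ≤ c * ‖x‖^a + c * ‖τ x‖^a := add_le_add (hgrowth x) (hgrowth _)
        _ ≤ c * ‖x‖^a + c * ‖x‖^a :=
            add_le_add (le_refl _) (mul_le_mul_of_nonneg_left htax hc.le)
        _ = 2*c*(‖x‖^(a-p) * ‖x‖^p) := by rw [← hsplit]; ring
        _ ≤ 2*c*(M^(a-p) * ‖x‖^p) := by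
            refine mul_le_mul_of_nonneg_left
              (mul_le_mul_of_nonneg_right hbase (Real.rpow_nonneg (norm_nonneg _) p))
              (by positivity)
        _ = 2*c*M^(a-p) * ‖x‖^p := by ring
  -- the four bounded measurable functions
  have hg₁cont : Continuous g₁ := stmt12_lipCont g₁ L₁ hL₁
  have hg₂cont : Continuous g₂ := stmt12_lipCont g₂ L₂ hL₂
  set A1 : Ω → ℝ := fun ω => g₁ (fun α => h (X (iidx α) ω)) with hA1def
  set A2 : Ω → ℝ := fun ω => g₂ (fun β => h (X (jidx β) ω)) with hA2def
  set A1' : Ω → ℝ := fun ω => g₁ (fun α => ψ (X (iidx α) ω)) with hA1'def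
  set A2' : Ω → ℝ := fun ω => g₂ (fun β => ψ (X (jidx β) ω)) with hA2'def
  have hA1m : Measurable A1 := hg₁cont.measurable.comp
    (measurable_pi_lambda _ fun α => hhcont.measurable.comp (hmeas _))
  have hA2m : Measurable A2 := hg₂cont.measurable.comp
    (measurable_pi_lambda _ fun β => hhcont.measurable.comp (hmeas _))
  have hA1'm : Measurable A1' := hg₁cont.measurable.comp
    (measurable_pi_lambda _ fun α => hψcont.measurable.comp (hmeas _))
  have hA2'm : Measurable A2' := hg₂cont.measurable.comp
    (measurable_pi_lambda _ fun β => hψcont.measurable.comp (hmeas _))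
  have hA1b : ∀ ω, |A1 ω| ≤ B₁ := fun ω => hB₁ _
  have hA2b : ∀ ω, |A2 ω| ≤ B₂ := fun ω => hB₂ _
  have hA1'b : ∀ ω, |A1' ω| ≤ B₁ := fun ω => hB₁ _
  have hA2'b : ∀ ω, |A2' ω| ≤ B₂ := fun ω => hB₂ _
  have hiA1 : Integrable A1 μ := stmt12_bddInt μ hA1m hA1b
  have hiA2 : Integrable A2 μ := stmt12_bddInt μ hA2m hA2b
  have hiA1' : Integrable A1' μ := stmt12_bddInt μ hA1'm hA1'b
  have hiA2' : Integrable A2' μ := stmt12_bddInt μ hA2'm hA2'b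
  have hiP : Integrable (fun ω => A1 ω * A2 ω) μ :=
    stmt12_bddInt μ (hA1m.mul hA2m) (fun ω => by
      rw [abs_mul]; exact mul_le_mul (hA1b ω) (hA2b ω) (abs_nonneg _) hB₁0)
  have hiP' : Integrable (fun ω => A1' ω * A2' ω) μ :=
    stmt12_bddInt μ (hA1'm.mul hA2'm) (fun ω => by
      rw [abs_mul]; exact mul_le_mul (hA1'b ω) (hA2'b ω) (abs_nonneg _) hB₁0)
  have hiD1 : Integrable (fun ω => |A1 ω - A1' ω|) μ := (hiA1.sub hiA1').abs
  have hiD2 : Integrable (fun ω => |A2 ω - A2' ω|) μ := (hiA2.sub hiA2').abs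
  -- truncation error integrals
  have hiR1 : Integrable (fun ω => L₁ * ∑ α, 2*c*M^(a-p) * ‖X (iidx α) ω‖^p) μ :=
    (integrable_finset_sum _ fun α _ => ((hXK (iidx α)).1.const_mul (2*c*M^(a-p)))).const_mul L₁
  have hiR2 : Integrable (fun ω => L₂ * ∑ β, 2*c*M^(a-p) * ‖X (jidx β) ω‖^p) μ :=
    (integrable_finset_sum _ fun β _ => ((hXK (jidx β)).1.const_mul (2*c*M^(a-p)))).const_mul L₂
  have hI1 : (∫ ω, |A1 ω - A1' ω| ∂μ) ≤ (u:ℝ) * L₁ * (2*c*M^(a-p) * K) := by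
    calc (∫ ω, |A1 ω - A1' ω| ∂μ)
        ≤ ∫ ω, L₁ * ∑ α, 2*c*M^(a-p) * ‖X (iidx α) ω‖^p ∂μ := by
          refine integral_mono hiD1 hiR1 fun ω => ?_
          refine (hL₁ _ _).trans ?_
          exact mul_le_mul_of_nonneg_left (Finset.sum_le_sum fun α _ => hΔh _) hL₁0
      _ = L₁ * ∑ _α : Fin u, (2*c*M^(a-p) * K) := by
          rw [integral_const_mul, integral_finset_sum _
            (fun α _ => ((hXK (iidx α)).1.const_mul (2*c*M^(a-p))))]
          refine congrArg (L₁ * ·) (Finset.sum_congr rfl fun α _ => ?_)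
          rw [integral_const_mul, (hXK (iidx α)).2]
      _ = (u:ℝ) * L₁ * (2*c*M^(a-p) * K) := by
          simp only [Finset.sum_const, Finset.card_univ, Fintype.card_fin, nsmul_eq_mul]
          ring
  have hI2 : (∫ ω, |A2 ω - A2' ω| ∂μ) ≤ (v:ℝ) * L₂ * (2*c*M^(a-p) * K) := by
    calc (∫ ω, |A2 ω - A2' ω| ∂μ)
        ≤ ∫ ω, L₂ * ∑ β, 2*c*M^(a-p) * ‖X (jidx β) ω‖^p ∂μ := by
          refine integral_mono hiD2 hiR2 fun ω => ?_
          refine (hL₂ _ _).trans ?_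
          exact mul_le_mul_of_nonneg_left (Finset.sum_le_sum fun β _ => hΔh _) hL₂0
      _ = L₂ * ∑ _β : Fin v, (2*c*M^(a-p) * K) := by
          rw [integral_const_mul, integral_finset_sum _
            (fun β _ => ((hXK (jidx β)).1.const_mul (2*c*M^(a-p))))]
          refine congrArg (L₂ * ·) (Finset.sum_congr rfl fun β _ => ?_)
          rw [integral_const_mul, (hXK (jidx β)).2]
      _ = (v:ℝ) * L₂ * (2*c*M^(a-p) * K) := by
          simp only [Finset.sum_const, Finset.card_univ, Fintype.card_fin, nsmul_eq_mul]
          ring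
  -- covariance comparison terms
  have hT1 : |(∫ ω, A1 ω * A2 ω ∂μ) - ∫ ω, A1' ω * A2' ω ∂μ|
      ≤ (∫ ω, |A1 ω - A1' ω| ∂μ) * B₂ + B₁ * ∫ ω, |A2 ω - A2' ω| ∂μ := by
    rw [← integral_sub hiP hiP']
    refine (stmt12_absInt μ _).trans ?_
    calc (∫ ω, |A1 ω * A2 ω - A1' ω * A2' ω| ∂μ)
        ≤ ∫ ω, (|A1 ω - A1' ω| * B₂ + B₁ * |A2 ω - A2' ω|) ∂μ := by
          refine integral_mono (hiP.sub hiP').abs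
            ((hiD1.mul_const B₂).add (hiD2.const_mul B₁)) fun ω => ?_
          have e : A1 ω * A2 ω - A1' ω * A2' ω
              = (A1 ω - A1' ω) * A2 ω + A1' ω * (A2 ω - A2' ω) := by ring
          rw [e]
          refine (abs_add_le _ _).trans ?_
          rw [abs_mul, abs_mul]
          exact add_le_add (mul_le_mul_of_nonneg_left (hA2b ω) (abs_nonneg _))
            (mul_le_mul_of_nonneg_right (hA1'b ω) (abs_nonneg _))
      _ = (∫ ω, |A1 ω - A1' ω| ∂μ) * B₂ + B₁ * ∫ ω, |A2 ω - A2' ω| ∂μ := by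
          rw [integral_add (hiD1.mul_const B₂) (hiD2.const_mul B₁),
            integral_mul_const, integral_const_mul]
  have hJ1 : |(∫ ω, A1' ω ∂μ) - ∫ ω, A1 ω ∂μ| ≤ ∫ ω, |A1 ω - A1' ω| ∂μ := by
    rw [abs_sub_comm, ← integral_sub hiA1 hiA1']
    exact stmt12_absInt μ _
  have hJ2 : |(∫ ω, A2' ω ∂μ) - ∫ ω, A2 ω ∂μ| ≤ ∫ ω, |A2 ω - A2' ω| ∂μ := by
    rw [abs_sub_comm, ← integral_sub hiA2 hiA2']
    exact stmt12_absInt μ _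
  have hE1 : |∫ ω, A1 ω ∂μ| ≤ B₁ := stmt12_intLe μ hA1b
  have hE2' : |∫ ω, A2' ω ∂μ| ≤ B₂ := stmt12_intLe μ hA2'b
  have hT3 : |(∫ ω, A1' ω ∂μ) * (∫ ω, A2' ω ∂μ) - (∫ ω, A1 ω ∂μ) * ∫ ω, A2 ω ∂μ|
      ≤ (∫ ω, |A1 ω - A1' ω| ∂μ) * B₂ + B₁ * ∫ ω, |A2 ω - A2' ω| ∂μ := by
    have e : (∫ ω, A1' ω ∂μ) * (∫ ω, A2' ω ∂μ) - (∫ ω, A1 ω ∂μ) * ∫ ω, A2 ω ∂μ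
        = ((∫ ω, A1' ω ∂μ) - ∫ ω, A1 ω ∂μ) * (∫ ω, A2' ω ∂μ)
          + (∫ ω, A1 ω ∂μ) * ((∫ ω, A2' ω ∂μ) - ∫ ω, A2 ω ∂μ) := by ring
    rw [e]
    refine (abs_add_le _ _).trans ?_
    rw [abs_mul, abs_mul]
    refine add_le_add (mul_le_mul hJ1 hE2' (abs_nonneg _)
      (integral_nonneg fun ω => abs_nonneg _))
      (mul_le_mul hE1 hJ2 (abs_nonneg _) hB₁0)
  -- weak dependence applied to truncated functions
  have hTm : |(∫ ω, A1' ω * A2' ω ∂μ) - (∫ ω, A1' ω ∂μ) * ∫ ω, A2' ω ∂μ|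
      ≤ ((u:ℝ) * (L₁ * (2*c*M^(a-1))) * B₂ + (v:ℝ) * (L₂ * (2*c*M^(a-1))) * B₁) * η r := by
    have := hηdep r u v iidx jidx hmono1 hmono2 hgap
      (fun x => g₁ (fun α => ψ (x α))) (fun x => g₂ (fun β => ψ (x β)))
      (L₁ * (2*c*M^(a-1))) (L₂ * (2*c*M^(a-1))) B₁ B₂
      (fun x => hB₁ _) (fun x => hB₂ _)
      (fun x y => by
        calc |g₁ (fun α => ψ (x α)) - g₁ (fun α => ψ (y α))|
            ≤ L₁ * ∑ α, |ψ (x α) - ψ (y α)| := hL₁ _ _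
          _ ≤ L₁ * ∑ α, 2*c*M^(a-1) * ‖x α - y α‖ :=
              mul_le_mul_of_nonneg_left (Finset.sum_le_sum fun α _ => hψlip _ _) hL₁0
          _ = L₁ * (2*c*M^(a-1)) * ∑ α, ‖x α - y α‖ := by
              rw [← Finset.mul_sum]; ring)
      (fun x y => by
        calc |g₂ (fun β => ψ (x β)) - g₂ (fun β => ψ (y β))|
            ≤ L₂ * ∑ β, |ψ (x β) - ψ (y β)| := hL₂ _ _
          _ ≤ L₂ * ∑ β, 2*c*M^(a-1) * ‖x β - y β‖ :=
              mul_le_mul_of_nonneg_left (Finset.sum_le_sum fun β _ => hψlip _ _) hL₂0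
          _ = L₂ * (2*c*M^(a-1)) * ∑ β, ‖x β - y β‖ := by
              rw [← Finset.mul_sum]; ring)
    exact this
  -- putting everything together
  have tri : ∀ P P' Q' Q : ℝ, |P - Q| ≤ |P - P'| + |P' - Q'| + |Q' - Q| := by
    intro P P' Q' Q
    calc |P - Q| ≤ |P - P'| + |P' - Q| := abs_sub_le _ _ _
      _ ≤ |P - P'| + (|P' - Q'| + |Q' - Q|) := add_le_add (le_refl _) (abs_sub_le _ _ _)
      _ = |P - P'| + |P' - Q'| + |Q' - Q| := by ring
  have hQQ : |(∫ ω, A1' ω ∂μ) * (∫ ω, A2' ω ∂μ) - (∫ ω, A1 ω ∂μ) * ∫ ω, A2 ω ∂μ|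
      = |(∫ ω, A1 ω ∂μ) * (∫ ω, A2 ω ∂μ) - (∫ ω, A1' ω ∂μ) * ∫ ω, A2' ω ∂μ| :=
    abs_sub_comm _ _
  calc |(∫ ω, A1 ω * A2 ω ∂μ) - (∫ ω, A1 ω ∂μ) * ∫ ω, A2 ω ∂μ|
      ≤ |(∫ ω, A1 ω * A2 ω ∂μ) - ∫ ω, A1' ω * A2' ω ∂μ|
        + |(∫ ω, A1' ω * A2' ω ∂μ) - (∫ ω, A1' ω ∂μ) * ∫ ω, A2' ω ∂μ|
        + |(∫ ω, A1' ω ∂μ) * (∫ ω, A2' ω ∂μ) - (∫ ω, A1 ω ∂μ) * ∫ ω, A2 ω ∂μ| :=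
        tri _ _ _ _
    _ ≤ ((∫ ω, |A1 ω - A1' ω| ∂μ) * B₂ + B₁ * ∫ ω, |A2 ω - A2' ω| ∂μ)
        + ((u:ℝ) * (L₁ * (2*c*M^(a-1))) * B₂ + (v:ℝ) * (L₂ * (2*c*M^(a-1))) * B₁) * η r
        + ((∫ ω, |A1 ω - A1' ω| ∂μ) * B₂ + B₁ * ∫ ω, |A2 ω - A2' ω| ∂μ) :=
        add_le_add (add_le_add hT1 hTm) hT3
    _ ≤ (((u:ℝ) * L₁ * (2*c*M^(a-p) * K)) * B₂ + B₁ * ((v:ℝ) * L₂ * (2*c*M^(a-p) * K)))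
        + ((u:ℝ) * (L₁ * (2*c*M^(a-1))) * B₂ + (v:ℝ) * (L₂ * (2*c*M^(a-1))) * B₁) * η r
        + (((u:ℝ) * L₁ * (2*c*M^(a-p) * K)) * B₂ + B₁ * ((v:ℝ) * L₂ * (2*c*M^(a-p) * K))) := by
        gcongr
    _ = ((u:ℝ) * L₁ * B₂ + (v:ℝ) * L₂ * B₁) * (2*c*(M^(a-1) * η r) + 4*c*K*(M^(a-p))) := by
        ring
    _ = ((u:ℝ) * L₁ * B₂ + (v:ℝ) * L₂ * B₁)
        * (2 * c * (1 + 2 * K) * η r ^ ((p - a) / (p - 1))) := by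
        rw [hKey1, hKey2]; ring
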